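/- Let P = {0, 1, …, m−1} × {0, 1, …, n−1} ⊆ ℝ² be the vertex set of an m × n regular grid, and let k ≥ 2 be a natural number. Then there exists a coloring χ of the 2-element subsets of P with k colors such that for every axis-parallel closed rectangle R = [a₁, b₁] × [a₂, b₂] with |R ∩ P| ≥ √(126 · k · ln k) and for every color c ∈ {1, …, k}, there exists a 2-element subset {x, y} ⊆ R ∩ P with χ({x, y}) = c. -/

import Mathlib

namespace GridPair

def tri : ℕ → ℕ
  | 0 => 0
  | d+1 => tri d + d

def triP (L : ℕ) : ℕ := tri (L/2 + 1)

lemma tri_succ (d : ℕ) : tri (d+1) = tri d + d := rfl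

lemma tri_mono : Monotone tri :=
  monotone_nat_of_le_succ fun d => by rw [tri_succ]; omega

lemma triP_mono : Monotone triP := fun x y h =>
  tri_mono (by omega : x/2 + 1 ≤ y/2 + 1)

lemma two_tri (d : ℕ) : 2 * tri d = d * (d - 1) := by
  induction d with
  | zero => rfl
  | succ d ih =>
    rw [tri_succ, Nat.mul_add, ih]
    rcases d with _ | e
    · rfl
    · simp only [Nat.add_sub_cancel]
      ring

lemma sq_le_triP (L : ℕ) : L*L ≤ 8 * triP L + 1 := by
  have h2 : 2 * triP L = (L/2 + 1) * (L/2) := by rw [triP, two_tri, Nat.add_sub_cancel]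
  have hL : L = 2 * (L/2) + L % 2 := by omega
  have hm : L % 2 ≤ 1 := by omega
  nlinarith [Nat.zero_le (L/2)]

lemma tri_surj {D w : ℕ} (hw : w < tri (D+1)) :
    ∃ d r, 1 ≤ d ∧ d ≤ D ∧ r < d ∧ tri d + r = w := by
  induction D with
  | zero => simp [tri] at hw
  | succ D ih =>
    by_cases h : w < tri (D+1)
    · obtain ⟨d, r, h1, h2, h3, h4⟩ := ih h
      exact ⟨d, r, h1, by omega, h3, h4⟩
    · push_neg at h
      refine ⟨D+1, w - tri (D+1), by omega, le_refl _, ?_, by omega⟩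
      have := tri_succ (D+1)
      omega

lemma residue (α d r : ℕ) (hd : 0 < d) (hr : r < d) :
    ∃ z, α ≤ z ∧ z < α + d ∧ z % d = r := by
  have hs : α % d < d := Nat.mod_lt _ hd
  set s := α % d with hsdef
  set t := (r + d - s) % d with ht
  have htlt : t < d := Nat.mod_lt _ hd
  have key : (s + t) % d = r := by
    rcases le_or_gt s r with h | h
    · have h1 : t = r - s := by
        rw [ht, show r + d - s = (r - s) + d by omega, Nat.add_mod_right]
        exact Nat.mod_eq_of_lt (by omega)
      rw [h1, show s + (r - s) = r by omega]
      exact Nat.mod_eq_of_lt hr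
    · have h1 : t = r + d - s := Nat.mod_eq_of_lt (by omega)
      rw [h1, show s + (r + d - s) = r + d by omega, Nat.add_mod_right]
      exact Nat.mod_eq_of_lt hr
  refine ⟨α + t, by omega, by omega, ?_⟩
  rw [Nat.add_mod, Nat.mod_eq_of_lt htlt, ← hsdef]
  exact key

def G (k u v : ℕ) : ℕ := (u * 2^(Nat.log 2 v) + (v - 2^(Nat.log 2 v))) % k

lemma G_zero (k u : ℕ) : G k u 0 = u % k := by simp [G]

lemma G_spec (k u j w : ℕ) (hw : w < 2^j) :
    G k u (2^j + w) = (u * 2^j + w) % k := by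
  have hlog : Nat.log 2 (2^j + w) = j :=
    Nat.log_eq_of_pow_le_of_lt_pow (by omega) (by rw [pow_succ]; omega)
  rw [G, hlog, Nat.add_sub_cancel_left]

def ltx (u v : ℕ × ℕ) : Prop := u.1 < v.1 ∨ (u.1 = v.1 ∧ u.2 < v.2)

def mc (k : ℕ) (u v : ℕ × ℕ) : ℕ :=
  if u.1 = v.1 then G k (tri (v.2-u.2) + u.2 % (v.2-u.2)) 0
  else if u.2 = v.2 then G k (tri (v.1-u.1) + u.1 % (v.1-u.1)) 0
  else if u.2 < v.2 then
    G k (tri (v.1-u.1) + u.1 % (v.1-u.1)) (tri (v.2-u.2) + u.2 % (v.2-u.2))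
  else
    G k (tri (u.2-v.2) + v.2 % (u.2-v.2)) (tri (v.1-u.1) + u.1 % (v.1-u.1))

def covCond (k w h : ℕ) : Prop :=
  k ≤ triP w ∨ k ≤ triP h ∨
  (∃ j, 2^(j+1) ≤ triP h ∧ k ≤ triP w * 2^j) ∨
  (∃ j, 2^(j+1) ≤ triP w ∧ k ≤ triP h * 2^j)

def cond (k w h : ℕ) : Prop :=
  k ≤ triP w ∨ k ≤ triP h ∨
  (∃ j ∈ Finset.range 16, 2^(j+1) ≤ triP h ∧ k ≤ triP w * 2^j) ∨
  (∃ j ∈ Finset.range 16, 2^(j+1) ≤ triP w ∧ k ≤ triP h * 2^j)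

instance (k w h : ℕ) : Decidable (cond k w h) := by unfold cond; infer_instance

lemma cond_covCond {k w h : ℕ} (hc : cond k w h) : covCond k w h := by
  rcases hc with h1 | h2 | ⟨j, _, hj⟩ | ⟨j, _, hj⟩
  · exact Or.inl h1
  · exact Or.inr (Or.inl h2)
  · exact Or.inr (Or.inr (Or.inl ⟨j, hj⟩))
  · exact Or.inr (Or.inr (Or.inr ⟨j, hj⟩))

lemma cond_mono {k w h w' h' : ℕ} (hw : w ≤ w') (hh : h ≤ h') (hc : cond k w h) :
    cond k w' h' := by
  have Hw := triP_mono hw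
  have Hh := triP_mono hh
  rcases hc with h1 | h2 | ⟨j, hj0, hj1, hj2⟩ | ⟨j, hj0, hj1, hj2⟩
  · exact Or.inl (le_trans h1 Hw)
  · exact Or.inr (Or.inl (le_trans h2 Hh))
  · exact Or.inr (Or.inr (Or.inl ⟨j, hj0, le_trans hj1 Hh,
      le_trans hj2 (Nat.mul_le_mul_right _ Hw)⟩))
  · exact Or.inr (Or.inr (Or.inr ⟨j, hj0, le_trans hj1 Hw,
      le_trans hj2 (Nat.mul_le_mul_right _ Hh)⟩))

lemma glue {k t : ℕ} (ht : 1 ≤ t)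
    (hchk : ∀ a ∈ Finset.Icc 1 t, cond k a ((t + a - 1) / a))
    {w h : ℕ} (hwh : t ≤ w * h) : cond k w h := by
  have hw1 : 1 ≤ w := by
    by_contra hcon; push_neg at hcon; interval_cases w <;> omega
  have hh1 : 1 ≤ h := by
    by_contra hcon; push_neg at hcon; interval_cases h <;> omega
  rcases le_or_gt w t with hle | hgt
  · have hkey := hchk w (Finset.mem_Icc.mpr ⟨hw1, hle⟩)
    refine cond_mono (le_refl w) ?_ hkey
    have h1 : t + w - 1 ≤ w * h + (w - 1) := by omega
    calc (t + w - 1) / w ≤ (w * h + (w - 1)) / w := Nat.div_le_div_right h1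
      _ = h + (w-1)/w := Nat.mul_add_div (by omega) h (w-1)
      _ = h := by rw [Nat.div_eq_of_lt (by omega)]; omega
  · have hkey := hchk t (Finset.mem_Icc.mpr ⟨ht, le_refl t⟩)
    have heq : (t + t - 1) / t = 1 := by
      rw [show t + t - 1 = t * 1 + (t - 1) by omega, Nat.mul_add_div (by omega),
        Nat.div_eq_of_lt (by omega)]
    rw [heq] at hkey
    exact cond_mono (by omega) hh1 hkey

lemma decode1D (α L u : ℕ) (hu : u < triP L) :
    ∃ z d, 1 ≤ d ∧ α ≤ z ∧ z + d < α + L ∧ tri d + z % d = u := by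
  obtain ⟨d, r, hd1, hdD, hr, he⟩ := tri_surj hu
  obtain ⟨z, hz1, hz2, hz3⟩ := residue α d r hd1 hr
  refine ⟨z, d, hd1, hz1, ?_, by rw [hz3]; exact he⟩
  have : d ≤ L / 2 := hdD
  omega

lemma mc_row (k x1 x2 y : ℕ) (h : x1 < x2) :
    mc k (x1, y) (x2, y) = G k (tri (x2-x1) + x1 % (x2-x1)) 0 := by
  simp [mc, Nat.ne_of_lt h]

lemma mc_col (k x y1 y2 : ℕ) :
    mc k (x, y1) (x, y2) = G k (tri (y2-y1) + y1 % (y2-y1)) 0 := by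
  simp [mc]

lemma mc_up (k x1 x2 y1 y2 : ℕ) (hx : x1 < x2) (hy : y1 < y2) :
    mc k (x1, y1) (x2, y2)
      = G k (tri (x2-x1) + x1 % (x2-x1)) (tri (y2-y1) + y1 % (y2-y1)) := by
  simp [mc, Nat.ne_of_lt hx, Nat.ne_of_lt hy, hy]

lemma mc_down (k x1 x2 y1 y2 : ℕ) (hx : x1 < x2) (hy : y2 < y1) :
    mc k (x1, y1) (x2, y2)
      = G k (tri (y1-y2) + y2 % (y1-y2)) (tri (x2-x1) + x1 % (x2-x1)) := by
  simp [mc, Nat.ne_of_lt hx, (Nat.ne_of_lt hy).symm, Nat.not_lt.mpr (Nat.le_of_lt hy)]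

lemma cover (k w h α β : ℕ) (_hk : 2 ≤ k) (hw : 1 ≤ w) (hh : 1 ≤ h)
    (hcc : covCond k w h) (c : ℕ) (hc : c < k) :
    ∃ x1 y1 x2 y2 : ℕ,
      α ≤ x1 ∧ x1 < α + w ∧ α ≤ x2 ∧ x2 < α + w ∧
      β ≤ y1 ∧ y1 < β + h ∧ β ≤ y2 ∧ y2 < β + h ∧
      ltx (x1, y1) (x2, y2) ∧ mc k (x1, y1) (x2, y2) = c := by
  rcases hcc with hA | hB | ⟨j, hj1, hj2⟩ | ⟨j, hj1, hj2⟩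
  · obtain ⟨z, d, hd1, hz1, hz2, he⟩ := decode1D α w c (lt_of_lt_of_le hc hA)
    refine ⟨z, β, z + d, β, hz1, by omega, by omega, by omega, le_refl β, by omega,
      le_refl β, by omega, Or.inl (by simp; omega), ?_⟩
    rw [mc_row k z (z+d) β (by omega), Nat.add_sub_cancel_left, he, G_zero]
    exact Nat.mod_eq_of_lt hc
  · obtain ⟨z, d, hd1, hz1, hz2, he⟩ := decode1D β h c (lt_of_lt_of_le hc hB)
    refine ⟨α, z, α, z + d, le_refl α, by omega, le_refl α, by omega, hz1, by omega,
      by omega, by omega, Or.inr ⟨rfl, by simp; omega⟩, ?_⟩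
    rw [mc_col, Nat.add_sub_cancel_left, he, G_zero]
    exact Nat.mod_eq_of_lt hc
  · have hp : (0:ℕ) < 2^j := by positivity
    have hu : c / 2^j < triP w := (Nat.div_lt_iff_lt_mul hp).mpr (lt_of_lt_of_le hc hj2)
    have hmod : c % 2^j < 2^j := Nat.mod_lt _ hp
    have hv : 2^j + c % 2^j < triP h := by
      have := hj1; rw [pow_succ] at this; omega
    obtain ⟨zx, dx, hdx1, hzx1, hzx2, hex⟩ := decode1D α w (c / 2^j) hu
    obtain ⟨zy, dy, hdy1, hzy1, hzy2, hey⟩ := decode1D β h (2^j + c % 2^j) hv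
    refine ⟨zx, zy, zx + dx, zy + dy, hzx1, by omega, by omega, by omega,
      hzy1, by omega, by omega, by omega, Or.inl (by simp; omega), ?_⟩
    rw [mc_up k zx (zx+dx) zy (zy+dy) (by omega) (by omega),
      Nat.add_sub_cancel_left, Nat.add_sub_cancel_left, hex, hey,
      G_spec k _ j _ hmod]
    rw [show c / 2^j * 2^j + c % 2^j = c from by
      rw [Nat.mul_comm]; exact Nat.div_add_mod c (2^j)]
    exact Nat.mod_eq_of_lt hc
  · have hp : (0:ℕ) < 2^j := by positivity
    have hu : c / 2^j < triP h := (Nat.div_lt_iff_lt_mul hp).mpr (lt_of_lt_of_le hc hj2)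
    have hmod : c % 2^j < 2^j := Nat.mod_lt _ hp
    have hv : 2^j + c % 2^j < triP w := by
      have := hj1; rw [pow_succ] at this; omega
    obtain ⟨zy, dy, hdy1, hzy1, hzy2, hey⟩ := decode1D β h (c / 2^j) hu
    obtain ⟨zx, dx, hdx1, hzx1, hzx2, hex⟩ := decode1D α w (2^j + c % 2^j) hv
    refine ⟨zx, zy + dy, zx + dx, zy, hzx1, by omega, by omega, by omega,
      by omega, by omega, hzy1, by omega, Or.inl (by simp; omega), ?_⟩
    rw [mc_down k zx (zx+dx) (zy+dy) zy (by omega) (by omega),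
      Nat.add_sub_cancel_left, Nat.add_sub_cancel_left, hey, hex,
      G_spec k _ j _ hmod]
    rw [show c / 2^j * 2^j + c % 2^j = c from by
      rw [Nat.mul_comm]; exact Nat.div_add_mod c (2^j)]
    exact Nat.mod_eq_of_lt hc

lemma big_k {k w h : ℕ} (hk : 16 ≤ k) (hsq : 349 * k ≤ (w * h) * (w * h)) :
    covCond k w h := by
  have hP := sq_le_triP w
  have hQ := sq_le_triP h
  rcases le_or_gt w 3 with hw3 | hw4
  · have h1 : w * h ≤ 3 * h := Nat.mul_le_mul_right h hw3
    have h2 : 349 * k ≤ 9 * (h * h) := le_trans hsq (by nlinarith [Nat.mul_le_mul h1 h1])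
    have h3 : 349 * k ≤ 72 * triP h + 9 := by nlinarith
    exact Or.inr (Or.inl (by omega))
  rcases le_or_gt h 3 with hh3 | hh4
  · have h1 : w * h ≤ w * 3 := Nat.mul_le_mul_left w hh3
    have h2 : 349 * k ≤ 9 * (w * w) := le_trans hsq (by nlinarith [Nat.mul_le_mul h1 h1])
    have h3 : 349 * k ≤ 72 * triP w + 9 := by nlinarith
    exact Or.inl (by omega)
  · have hQ2 : 2 ≤ triP h := by
      have := triP_mono (show 4 ≤ h by omega)
      simp only [show triP 4 = 3 from rfl] at this
      omega
    have hlog1 : 1 ≤ Nat.log 2 (triP h) := Nat.log_pos (by norm_num) hQ2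
    set j := Nat.log 2 (triP h) - 1 with hj
    have hj1 : 2^(j+1) ≤ triP h := by
      rw [show j + 1 = Nat.log 2 (triP h) by omega]
      exact Nat.pow_log_le_self 2 (by omega)
    have hj2 : triP h < 2^(j+2) := by
      rw [show j + 2 = Nat.log 2 (triP h) + 1 by omega]
      exact Nat.lt_pow_succ_log_self (by norm_num) _
    refine Or.inr (Or.inr (Or.inl ⟨j, hj1, ?_⟩))
    by_contra hcon
    push_neg at hcon
    have e1 : 15 * (w*w) ≤ 128 * triP w := by
      nlinarith [hP, show 16 ≤ w*w from by nlinarith]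
    have e2 : 15 * (h*h) ≤ 128 * triP h := by
      nlinarith [hQ, show 16 ≤ h*h from by nlinarith]
    have e3 : (15*(w*w)) * (15*(h*h)) ≤ (128 * triP w) * (128 * triP h) :=
      Nat.mul_le_mul e1 e2
    have e4 : 78525 * k ≤ 16384 * (triP w * triP h) := by nlinarith [e3, hsq]
    have e5 : triP w * triP h + triP w ≤ 4 * (triP w * 2^j) := by
      calc triP w * triP h + triP w = triP w * (triP h + 1) := by ring
        _ ≤ triP w * (2^(j+2)) := Nat.mul_le_mul_left _ (by omega)
        _ = 4 * (triP w * 2^j) := by ring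
    have e6 : triP w * 2^j + 1 ≤ k := hcon
    linarith [e4, e5, e6, Nat.zero_le (triP w)]

lemma sqrt_bound {k wh : ℕ} (hk2 : 2 ≤ k)
    (hs : Real.sqrt (126 * k * Real.log k) ≤ (wh : ℝ))
    (s p q : ℕ) (hp : 0 < p) (hq : 0 < q) (hpow : 2^p ≤ k^q)
    (hnum : ((s : ℝ) * s) * q ≤ ((126 * k * p) : ℕ) * 0.6931471803) :
    s < wh := by
  have hk1 : (1:ℝ) < (k:ℝ) := by exact_mod_cast hk2
  have hlogk : 0 < Real.log k := Real.log_pos hk1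
  have harg : (0:ℝ) ≤ 126 * k * Real.log k := by positivity
  have hsq : 126 * k * Real.log k ≤ (wh:ℝ)^2 := by
    calc 126 * k * Real.log k = Real.sqrt (126 * k * Real.log k) ^ 2 :=
          (Real.sq_sqrt harg).symm
      _ ≤ (wh:ℝ)^2 := by
          apply pow_le_pow_left₀ (Real.sqrt_nonneg _) hs
  have hlog2 : (p:ℝ) * Real.log 2 ≤ (q:ℝ) * Real.log k := by
    have h1 : ((2:ℝ))^p ≤ ((k:ℝ))^q := by exact_mod_cast hpow
    have h2 : Real.log ((2:ℝ)^p) ≤ Real.log ((k:ℝ)^q) :=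
      Real.log_le_log (by positivity) h1
    rwa [Real.log_pow, Real.log_pow] at h2
  have hd9 : (0.6931471803 : ℝ) < Real.log 2 := Real.log_two_gt_d9
  have hkpos : (0:ℝ) < (k:ℝ) := by positivity
  have step1 : ((s:ℝ) * s) * q < ((126 * k * p : ℕ):ℝ) * Real.log 2 := by
    have hc : (0:ℝ) < ((126 * k * p : ℕ):ℝ) := by
      have : 0 < 126 * k * p := by positivity
      exact_mod_cast this
    nlinarith
  have step2 : ((126 * k * p : ℕ):ℝ) * Real.log 2 ≤ (q:ℝ) * (126 * k * Real.log k) := by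
    push_cast
    nlinarith [hlog2, hkpos]
  have step3 : ((s:ℝ) * s) * q < (q:ℝ) * ((wh:ℝ)^2) := by
    calc ((s:ℝ) * s) * q < ((126 * k * p : ℕ):ℝ) * Real.log 2 := step1
      _ ≤ (q:ℝ) * (126 * k * Real.log k) := step2
      _ ≤ (q:ℝ) * ((wh:ℝ)^2) := by
          apply mul_le_mul_of_nonneg_left hsq (by positivity)
  have hqpos : (0:ℝ) < (q:ℝ) := by exact_mod_cast hq
  have hfin : (s:ℝ) * s < (wh:ℝ)^2 := by nlinarith
  have : (s:ℝ) < (wh:ℝ) := by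
    nlinarith [Nat.cast_nonneg (α := ℝ) s, Nat.cast_nonneg (α := ℝ) wh]
  exact_mod_cast this

lemma big_bound {k wh : ℕ} (hk : 16 ≤ k)
    (hs : Real.sqrt (126 * k * Real.log k) ≤ (wh : ℝ)) :
    349 * k ≤ wh * wh := by
  have hk1 : (1:ℝ) < (k:ℝ) := by exact_mod_cast (by omega : 1 < k)
  have hlogk : 0 < Real.log k := Real.log_pos hk1
  have harg : (0:ℝ) ≤ 126 * k * Real.log k := by positivity
  have hsq : 126 * k * Real.log k ≤ (wh:ℝ)^2 := by
    calc 126 * k * Real.log k = Real.sqrt (126 * k * Real.log k) ^ 2 :=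
          (Real.sq_sqrt harg).symm
      _ ≤ (wh:ℝ)^2 := by
          apply pow_le_pow_left₀ (Real.sqrt_nonneg _) hs
  have h16 : Real.log 16 ≤ Real.log k :=
    Real.log_le_log (by norm_num) (by exact_mod_cast hk)
  have h16e : Real.log 16 = 4 * Real.log 2 := by
    rw [show (16:ℝ) = 2^4 by norm_num, Real.log_pow]
    norm_num
  have hd9 : (0.6931471803 : ℝ) < Real.log 2 := Real.log_two_gt_d9
  have hkpos : (0:ℝ) < (k:ℝ) := by positivity
  have : (349:ℝ) * k ≤ (wh:ℝ)^2 := by nlinarith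
  have h2 : (349 * k : ℕ) ≤ ((wh * wh : ℕ) : ℝ) := by push_cast; nlinarith
  exact_mod_cast h2

set_option maxHeartbeats 3000000 in
lemma small_cov {k w h : ℕ} (hk2 : 2 ≤ k) (hk15 : k ≤ 15)
    (hs : Real.sqrt (126 * k * Real.log k) ≤ ((w * h : ℕ) : ℝ)) :
    covCond k w h := by
  interval_cases k
  · exact cond_covCond (glue (t := 14) (by norm_num) (by decide)
      (by have := sqrt_bound hk2 hs 13 1 1 (by norm_num) (by norm_num) (by norm_num) (by norm_num); omega))
  · exact cond_covCond (glue (t := 21) (by norm_num) (by decide)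
      (by have := sqrt_bound hk2 hs 20 19 12 (by norm_num) (by norm_num) (by norm_num) (by norm_num); omega))
  · exact cond_covCond (glue (t := 27) (by norm_num) (by decide)
      (by have := sqrt_bound hk2 hs 26 2 1 (by norm_num) (by norm_num) (by norm_num) (by norm_num); omega))
  · exact cond_covCond (glue (t := 32) (by norm_num) (by decide)
      (by have := sqrt_bound hk2 hs 31 16 7 (by norm_num) (by norm_num) (by norm_num) (by norm_num); omega))
  · exact cond_covCond (glue (t := 37) (by norm_num) (by decide)
      (by have := sqrt_bound hk2 hs 36 31 12 (by norm_num) (by norm_num) (by norm_num) (by norm_num); omega))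
  · exact cond_covCond (glue (t := 42) (by norm_num) (by decide)
      (by have := sqrt_bound hk2 hs 41 14 5 (by norm_num) (by norm_num) (by norm_num) (by norm_num); omega))
  · exact cond_covCond (glue (t := 46) (by norm_num) (by decide)
      (by have := sqrt_bound hk2 hs 45 3 1 (by norm_num) (by norm_num) (by norm_num) (by norm_num); omega))
  · exact cond_covCond (glue (t := 50) (by norm_num) (by decide)
      (by have := sqrt_bound hk2 hs 49 19 6 (by norm_num) (by norm_num) (by norm_num) (by norm_num); omega))
  · exact cond_covCond (glue (t := 54) (by norm_num) (by decide)
      (by have := sqrt_bound hk2 hs 53 23 7 (by norm_num) (by norm_num) (by norm_num) (by norm_num); omega))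
  · exact cond_covCond (glue (t := 58) (by norm_num) (by decide)
      (by have := sqrt_bound hk2 hs 57 44 13 (by norm_num) (by norm_num) (by norm_num) (by norm_num); omega))
  · exact cond_covCond (glue (t := 62) (by norm_num) (by decide)
      (by have := sqrt_bound hk2 hs 61 43 12 (by norm_num) (by norm_num) (by norm_num) (by norm_num); omega))
  · exact cond_covCond (glue (t := 65) (by norm_num) (by decide)
      (by have := sqrt_bound hk2 hs 64 29 8 (by norm_num) (by norm_num) (by norm_num) (by norm_num); omega))
  · exact cond_covCond (glue (t := 69) (by norm_num) (by decide)
      (by have := sqrt_bound hk2 hs 68 19 5 (by norm_num) (by norm_num) (by norm_num) (by norm_num); omega))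
  · exact cond_covCond (glue (t := 72) (by norm_num) (by decide)
      (by have := sqrt_bound hk2 hs 71 325 84 (by norm_num) (by norm_num) (by decide) (by norm_num); omega))

lemma ltx_asymm {u v : ℕ × ℕ} (h : ltx u v) : ¬ ltx v u := by
  rcases h with h | ⟨h1, h2⟩ <;> rintro (h' | ⟨h1', h2'⟩) <;> omega

lemma pair_unique {u v u' v' : ℕ × ℕ} (h : ltx u v) (h' : ltx u' v')
    (he : ({u, v} : Set (ℕ × ℕ)) = {u', v'}) : u = u' ∧ v = v' := by
  rcases Set.pair_eq_pair_iff.mp he with ⟨e1, e2⟩ | ⟨e1, e2⟩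
  · exact ⟨e1, e2⟩
  · subst e1; subst e2
    exact absurd h' (ltx_asymm h)

open Classical in
noncomputable def mcS (k : ℕ) (T : Set (ℕ × ℕ)) : ℕ :=
  if hT : ∃ z : (ℕ × ℕ) × (ℕ × ℕ), ltx z.1 z.2 ∧ T = {z.1, z.2} then
    mc k hT.choose.1 hT.choose.2
  else 0

lemma mcS_pair {k : ℕ} {u v : ℕ × ℕ} (h : ltx u v) :
    mcS k {u, v} = mc k u v := by
  have hT : ∃ z : (ℕ × ℕ) × (ℕ × ℕ), ltx z.1 z.2 ∧ ({u, v} : Set (ℕ × ℕ)) = {z.1, z.2} :=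
    ⟨(u, v), h, rfl⟩
  rw [mcS, dif_pos hT]
  obtain ⟨h1, h2⟩ := hT.choose_spec
  obtain ⟨e1, e2⟩ := pair_unique h h1 h2
  rw [← e1, ← e2]

noncomputable def pt (x y : ℕ) : EuclideanSpace ℝ (Fin 2) :=
  (WithLp.equiv 2 (Fin 2 → ℝ)).symm ![(x:ℝ), (y:ℝ)]

lemma pt_zero (x y : ℕ) : pt x y 0 = (x:ℝ) := by
  rfl

lemma pt_one (x y : ℕ) : pt x y 1 = (y:ℝ) := by
  rfl

lemma pt_inj : Function.Injective (fun z : ℕ × ℕ => pt z.1 z.2) := by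
  intro z z' he
  simp only at he
  have h0 : pt z.1 z.2 0 = pt z'.1 z'.2 0 := by rw [he]
  have h1 : pt z.1 z.2 1 = pt z'.1 z'.2 1 := by rw [he]
  rw [pt_zero, pt_zero] at h0
  rw [pt_one, pt_one] at h1
  have : z.1 = z'.1 := Nat.cast_inj.mp h0
  have : z.2 = z'.2 := Nat.cast_inj.mp h1
  exact Prod.ext ‹z.1 = z'.1› ‹z.2 = z'.2›

lemma interval_of_convex (s : Finset ℕ) (hne : s.Nonempty)
    (hconv : ∀ x y z : ℕ, x ∈ s → z ∈ s → x ≤ y → y ≤ z → y ∈ s) :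
    ∀ u, s.min' hne ≤ u → u < s.min' hne + s.card → u ∈ s := by
  have hIcc : s = Finset.Icc (s.min' hne) (s.max' hne) := by
    apply Finset.Subset.antisymm
    · intro z hz
      exact Finset.mem_Icc.mpr ⟨Finset.min'_le _ _ hz, Finset.le_max' _ _ hz⟩
    · intro z hz
      rw [Finset.mem_Icc] at hz
      exact hconv _ z _ (s.min'_mem hne) (s.max'_mem hne) hz.1 hz.2
  have hcard := congrArg Finset.card hIcc
  rw [Nat.card_Icc] at hcard
  have hmm : s.min' hne ≤ s.max' hne := Finset.min'_le _ _ (s.max'_mem hne)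
  intro u h1 h2
  rw [hIcc]
  exact Finset.mem_Icc.mpr ⟨h1, by omega⟩

end GridPair

open GridPair in
theorem grid_rectangle_pair_coloring
    (m n : ℕ) (P : Set (EuclideanSpace ℝ (Fin 2)))
    (hP : P = {p : EuclideanSpace ℝ (Fin 2) |
      (∃ a : ℕ, a < m ∧ p 0 = a) ∧ (∃ b : ℕ, b < n ∧ p 1 = b)})
    (k : ℕ) (hk : 2 ≤ k) :
    ∃ χ : Set (EuclideanSpace ℝ (Fin 2)) → Fin k,
      ∀ a b : EuclideanSpace ℝ (Fin 2),
        Real.sqrt (126 * k * Real.log k) ≤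
          ((P ∩ {p : EuclideanSpace ℝ (Fin 2) | ∀ i, a i ≤ p i ∧ p i ≤ b i}).ncard : ℝ) →
        ∀ col : Fin k, ∃ S : Set (EuclideanSpace ℝ (Fin 2)),
          S ⊆ P ∩ {p : EuclideanSpace ℝ (Fin 2) | ∀ i, a i ≤ p i ∧ p i ≤ b i} ∧
          S.ncard = 2 ∧ χ S = col := by
  classical
  refine ⟨fun S =>
    ⟨mcS k ((fun p : EuclideanSpace ℝ (Fin 2) => (⌊p 0⌋₊, ⌊p 1⌋₊)) '' S) % k,
      Nat.mod_lt _ (by omega)⟩, ?_⟩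
  intro a b hcard col
  set R := {p : EuclideanSpace ℝ (Fin 2) | ∀ i, a i ≤ p i ∧ p i ≤ b i} with hR
  set Ax := (Finset.range m).filter (fun x : ℕ => a 0 ≤ (x:ℝ) ∧ (x:ℝ) ≤ b 0) with hAx
  set By := (Finset.range n).filter (fun y : ℕ => a 1 ≤ (y:ℝ) ∧ (y:ℝ) ≤ b 1) with hBy
  -- membership helper
  have hmem : ∀ x y : ℕ, x ∈ Ax → y ∈ By → pt x y ∈ P ∩ R := by
    intro x y hx hy
    rw [hAx, Finset.mem_filter, Finset.mem_range] at hx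
    rw [hBy, Finset.mem_filter, Finset.mem_range] at hy
    constructor
    · rw [hP]
      exact ⟨⟨x, hx.1, pt_zero x y⟩, ⟨y, hy.1, pt_one x y⟩⟩
    · rw [hR]
      intro i
      have h2 : (i : Fin 2) = 0 ∨ i = 1 := by omega
      rcases h2 with h2 | h2
      · rw [h2, pt_zero]
        exact ⟨hx.2.1, hx.2.2⟩
      · rw [h2, pt_one]
        exact ⟨hy.2.1, hy.2.2⟩
  -- set description
  have hset : P ∩ R = (fun z : ℕ × ℕ => pt z.1 z.2) '' ↑(Ax ×ˢ By) := by
    ext p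
    constructor
    · rintro ⟨hp, hr⟩
      rw [hP] at hp
      obtain ⟨⟨x, hxm, hx0⟩, ⟨y, hyn, hy1⟩⟩ := hp
      rw [hR] at hr
      have hpe : p = pt x y := by
        ext i
        have h2 : (i : Fin 2) = 0 ∨ i = 1 := by omega
        rcases h2 with h2 | h2
        · rw [h2, pt_zero]; exact hx0
        · rw [h2, pt_one]; exact hy1
      refine ⟨(x, y), ?_, hpe.symm⟩
      rw [Finset.mem_coe, Finset.mem_product, hAx, hBy,
        Finset.mem_filter, Finset.mem_filter, Finset.mem_range, Finset.mem_range]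
      have h0 := hr 0
      have h1 := hr 1
      rw [hx0] at h0
      rw [hy1] at h1
      exact ⟨⟨hxm, h0⟩, ⟨hyn, h1⟩⟩
    · rintro ⟨z, hz, rfl⟩
      rw [Finset.mem_coe, Finset.mem_product] at hz
      exact hmem z.1 z.2 hz.1 hz.2
  -- cardinality
  have hncard : (P ∩ R).ncard = Ax.card * By.card := by
    rw [hset, Set.ncard_image_of_injective _ pt_inj, Set.ncard_coe_finset,
      Finset.card_product]
  rw [hncard] at hcard
  -- nonemptiness
  have hpos : 0 < Ax.card * By.card := by
    rcases Nat.eq_zero_or_pos (Ax.card * By.card) with h0 | hgt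
    · exfalso
      rw [h0] at hcard
      have hlt : (0:ℝ) < Real.sqrt (126 * k * Real.log k) := by
        apply Real.sqrt_pos.mpr
        have : (0:ℝ) < Real.log k := Real.log_pos (by exact_mod_cast hk)
        positivity
      have hle : Real.sqrt (126 * k * Real.log k) ≤ 0 := by exact_mod_cast hcard
      linarith
    · exact hgt
  have hAne : Ax.Nonempty := Finset.card_pos.mp
    (Nat.pos_of_ne_zero fun hz => by simp [hz] at hpos)
  have hBne : By.Nonempty := Finset.card_pos.mp
    (Nat.pos_of_ne_zero fun hz => by simp [hz] at hpos)
  -- interval structure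
  set w := Ax.card with hw
  set h := By.card with hh
  set αx := Ax.min' hAne with hαx
  set βy := By.min' hBne with hβy
  have hmemA : ∀ z, αx ≤ z → z < αx + w → z ∈ Ax := by
    apply interval_of_convex
    intro x y z hxm hzm hxy hyz
    rw [hAx, Finset.mem_filter, Finset.mem_range] at hxm hzm ⊢
    refine ⟨by omega, le_trans hxm.2.1 (Nat.cast_le.mpr hxy),
      le_trans (by exact_mod_cast hyz) hzm.2.2⟩
  have hmemB : ∀ z, βy ≤ z → z < βy + h → z ∈ By := by
    apply interval_of_convex
    intro x y z hxm hzm hxy hyz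
    rw [hBy, Finset.mem_filter, Finset.mem_range] at hxm hzm ⊢
    refine ⟨by omega, le_trans hxm.2.1 (Nat.cast_le.mpr hxy),
      le_trans (by exact_mod_cast hyz) hzm.2.2⟩
  have hw1 : 1 ≤ w := Finset.card_pos.mpr hAne
  have hh1 : 1 ≤ h := Finset.card_pos.mpr hBne
  -- the covering condition
  have hcc : covCond k w h := by
    rcases le_or_gt 16 k with hbig | hsmall
    · exact big_k hbig (by
        have := big_bound hbig (by exact_mod_cast hcard)
        nlinarith [this])
    · exact small_cov hk (by omega) (by exact_mod_cast hcard)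
  -- produce the pair
  obtain ⟨x1, y1, x2, y2, hx1a, hx1b, hx2a, hx2b, hy1a, hy1b, hy2a, hy2b, hlt, hmc⟩ :=
    cover k w h αx βy hk hw1 hh1 hcc col.val col.isLt
  refine ⟨{pt x1 y1, pt x2 y2}, ?_, ?_, ?_⟩
  · intro p hp
    rcases hp with hp | hp
    · rw [hp]
      exact hmem x1 y1 (hmemA x1 hx1a hx1b) (hmemB y1 hy1a hy1b)
    · rw [Set.mem_singleton_iff.mp hp]
      exact hmem x2 y2 (hmemA x2 hx2a hx2b) (hmemB y2 hy2a hy2b)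
  · apply Set.ncard_pair
    intro hcon
    have := pt_inj (a₁ := (x1,y1)) (a₂ := (x2,y2)) hcon
    rw [Prod.ext_iff] at this
    rcases hlt with hl | ⟨hl1, hl2⟩
    · simp at this; omega
    · simp at this; omega
  · -- color computation
    have himg : (fun p : EuclideanSpace ℝ (Fin 2) => (⌊p 0⌋₊, ⌊p 1⌋₊)) ''
        {pt x1 y1, pt x2 y2} = {(x1, y1), (x2, y2)} := by
      rw [Set.image_pair]
      simp [pt_zero, pt_one, Nat.floor_natCast]
    apply Fin.ext
    show mcS k _ % k = (col : ℕ)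
    rw [himg, mcS_pair hlt, hmc]
    exact Nat.mod_eq_of_lt col.isLt
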